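/- On the periodic gl(1|1) spin chain, the Hamiltonian is diagonalized in Fourier modes: as operators on H = (ℂ²)^{⊗N}, −Σ_{j=1}^{N} e_j = 2 Σ_{p∈P_N} (1 + sin p) θ_p† θ_{p+π}, where for p ∈ P_N, p+π denotes the unique element of P_N congruent to p+π modulo 2π. -/

import Mathlib

open Complex Matrix

noncomputable section

namespace SpinChain

/-- The state space of the `N`-site spin chain, `(ℂ²)^{⊗N}` realised as functions on
spin configurations. -/
abbrev V (N : ℕ) := (Fin N → Fin 2) → ℂ

/-- Operators on the spin chain, realised as matrices. -/
abbrev Op (N : ℕ) := Matrix (Fin N → Fin 2) (Fin N → Fin 2) ℂ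

def sigmaX : Matrix (Fin 2) (Fin 2) ℂ := !![0, 1; 1, 0]
def sigmaY : Matrix (Fin 2) (Fin 2) ℂ := !![0, -I; I, 0]
def sigmaZ : Matrix (Fin 2) (Fin 2) ℂ := !![1, 0; 0, -1]
def sigmaPlus : Matrix (Fin 2) (Fin 2) ℂ := ((1 : ℂ)/2) • (sigmaX + I • sigmaY)
def sigmaMinus : Matrix (Fin 2) (Fin 2) ℂ := ((1 : ℂ)/2) • (sigmaX - I • sigmaY)

variable (N : ℕ)

/-- The operator acting as the 2×2 matrix `a` on the `j`-th tensor factor and as the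
identity on the others. -/
def site (a : Matrix (Fin 2) (Fin 2) ℂ) (j : Fin N) : Op N :=
  Matrix.of fun x y =>
    a (x j) (y j) * ∏ k ∈ Finset.univ.filter (fun k => k ≠ j), (if x k = y k then (1 : ℂ) else 0)

/-- Jordan–Wigner string `∏_{k<j} diag(z 0, z 1)_k`. -/
def string (z : Fin 2 → ℂ) (j : Fin N) : Op N :=
  (((List.finRange N).filter (fun k => decide (k < j))).map
    (fun k => site N (Matrix.diagonal z) k)).prod

/-- Jordan–Wigner fermion `c_j := i^{1−j}·(∏_{k<j} diag(−i,i)_k)·σ⁻_j`; here the index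
`j : Fin N` labels the physical site `j+1`. -/
def c (j : Fin N) : Op N :=
  (I ^ (-(j : ℤ))) • (string N ![-I, I] j * site N sigmaMinus j)

/-- Jordan–Wigner fermion `c_j† := i^{j−1}·(∏_{k<j} diag(i,−i)_k)·σ⁺_j`. -/
def cd (j : Fin N) : Op N :=
  (I ^ ((j : ℕ))) • (string N ![I, -I] j * site N sigmaPlus j)

/-- The `gl(1|1)` fermion `f_j := i^j c_j` (physical index `j = j.val + 1`). -/
def f (j : Fin N) : Op N := (I ^ ((j : ℕ) + 1)) • c N j

/-- The `gl(1|1)` fermion `f_j† := i^j c_j†`. -/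
def fd (j : Fin N) : Op N := (I ^ ((j : ℕ) + 1)) • cd N j

/-- Cyclic successor on site indices. -/
def fsucc {N : ℕ} (j : Fin N) : Fin N := ⟨(j.val + 1) % N, Nat.mod_lt _ j.pos⟩

/-- Periodic Temperley–Lieb generators
`e_j = (f_j+f_{j+1})(f_j†+f_{j+1}†)`, with `e_N = (f_N+f_1)(f_N†+f_1†)`. -/
def e (j : Fin N) : Op N := (f N j + f N (fsucc j)) * (fd N j + fd N (fsucc j))

/-- `F_(m) := Σ_{j_1<⋯<j_m} f_{j_1}⋯f_{j_m}`. -/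
def Fg (m : ℕ) : Op N :=
  ∑ s ∈ Finset.univ.powersetCard m, ((s.sort (· ≤ ·)).map (f N)).prod

/-- `F†_(m) := Σ_{j_1<⋯<j_m} f†_{j_1}⋯f†_{j_m}`. -/
def Fdg (m : ℕ) : Op N :=
  ∑ s ∈ Finset.univ.powersetCard m, ((s.sort (· ≤ ·)).map (fd N)).prod

/-- `S^z := (1/2) Σ_j σ^z_j`. -/
def Sz : Op N := ((1 : ℂ)/2) • ∑ j : Fin N, site N sigmaZ j


/-- The Fourier-mode annihilation operator `θ_p := N^{−1/2} Σ_{k=1}^N e^{−ikp} c_k`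
(a 2π-periodic function of the real momentum `p`). -/
def theta (p : ℝ) : Op N :=
  ((Real.sqrt N : ℂ))⁻¹ • ∑ k : Fin N, Complex.exp (-(I * ((k : ℕ) + 1) * (p : ℂ))) • c N k

/-- The Fourier-mode creation operator `θ_p† := N^{−1/2} Σ_{k=1}^N e^{ikp} c_k†`. -/
def thetad (p : ℝ) : Op N :=
  ((Real.sqrt N : ℂ))⁻¹ • ∑ k : Fin N, Complex.exp (I * ((k : ℕ) + 1) * (p : ℂ)) • cd N k

/-- The allowed momenta of the periodic gl(1|1) chain: `p_m = 2πm/N` for `L` even,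
`p_m = (2m−1)π/N` for `L` odd (`m = 1, …, N`, labelled here by `m : Fin N ↦ m+1`). -/
def mom (L : ℕ) (m : Fin (2 * L)) : ℝ :=
  if Even L then 2 * Real.pi * ((m : ℕ) + 1) / (2 * L)
  else (2 * ((m : ℕ) : ℝ) + 1) * Real.pi / (2 * L)

def M (N : ℕ) (g : Fin N → Matrix (Fin 2) (Fin 2) ℂ) : Op N :=
  Matrix.of fun x y => ∏ k, g k (x k) (y k)

lemma M_mul (N : ℕ) (g h : Fin N → Matrix (Fin 2) (Fin 2) ℂ) :
    M N g * M N h = M N (fun k => g k * h k) := by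
  ext x y
  simp only [M, Matrix.mul_apply, Matrix.of_apply]
  have : ∀ z : Fin N → Fin 2, (∏ k, g k (x k) (z k)) * ∏ k, h k (z k) (y k)
      = ∏ k, (g k (x k) (z k) * h k (z k) (y k)) := fun z => by
    rw [Finset.prod_mul_distrib]
  simp only [this]
  rw [show (∏ k, ∑ t : Fin 2, g k (x k) t * h k t (y k))
      = ∑ z ∈ Fintype.piFinset (fun _ : Fin N => (Finset.univ : Finset (Fin 2))),
        ∏ k, g k (x k) (z k) * h k (z k) (y k) from Finset.prod_univ_sum _ _] at *
  · simp [Fintype.piFinset_univ]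

lemma M_congr (N : ℕ) {g h : Fin N → Matrix (Fin 2) (Fin 2) ℂ} (hk : ∀ k, g k = h k) :
    M N g = M N h := by
  have : g = h := funext hk
  rw [this]

lemma M_one (N : ℕ) : M N (fun _ => 1) = 1 := by
  ext x y
  simp only [M, Matrix.of_apply, Matrix.one_apply]
  by_cases h : x = y
  · subst h; simp
  · obtain ⟨k, hk⟩ : ∃ k, x k ≠ y k := by
      by_contra hc; push_neg at hc; exact h (funext hc)
    rw [if_neg h]
    exact Finset.prod_eq_zero (Finset.mem_univ k) (by simp [Matrix.one_apply, hk])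

lemma site_eq_M (N : ℕ) (a : Matrix (Fin 2) (Fin 2) ℂ) (j : Fin N) :
    site N a j = M N (fun k => if k = j then a else 1) := by
  ext x y
  simp only [site, M, Matrix.of_apply]
  rw [← Finset.prod_filter_mul_prod_filter_not Finset.univ (fun k => k = j)]
  rw [Finset.filter_eq' Finset.univ j]
  simp only [Finset.mem_univ, if_true, Finset.prod_singleton, if_pos rfl]
  congr 1
  refine Finset.prod_congr rfl fun k hk => ?_
  simp only [Finset.mem_filter] at hk
  rw [if_neg hk.2, Matrix.one_apply]

lemma M_smul_congr (N : ℕ) (g h : Fin N → Matrix (Fin 2) (Fin 2) ℂ) (j : Fin N) (s : ℂ)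
    (hj : g j = s • h j) (hk : ∀ k, k ≠ j → g k = h k) : M N g = s • M N h := by
  ext x y
  simp only [M, Matrix.of_apply, Matrix.smul_apply, smul_eq_mul]
  rw [← Finset.mul_prod_erase Finset.univ _ (Finset.mem_univ j),
      ← Finset.mul_prod_erase Finset.univ (fun k => h k (x k) (y k)) (Finset.mem_univ j)]
  rw [hj]
  have : ∀ k ∈ Finset.univ.erase j, g k (x k) (y k) = h k (x k) (y k) := fun k hks => by
    rw [hk k (Finset.mem_erase.mp hks).1]
  rw [Finset.prod_congr rfl this]
  simp [Matrix.smul_apply, mul_assoc]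

lemma list_prod_site (N : ℕ) (d : Fin N → Matrix (Fin 2) (Fin 2) ℂ) :
    ∀ (l : List (Fin N)), l.Nodup →
      (l.map (fun k => site N (d k) k)).prod = M N (fun k => if k ∈ l then d k else 1)
  | [], _ => by simpa using (M_one N).symm
  | a :: t, h => by
    obtain ⟨ha, ht⟩ := List.nodup_cons.mp h
    rw [List.map_cons, List.prod_cons, list_prod_site N d t ht, site_eq_M, M_mul]
    refine M_congr N fun k => ?_
    by_cases hka : k = a
    · subst hka; simp [ha]
    · by_cases hkt : k ∈ t <;> simp [hka, hkt]

lemma string_eq_M (N : ℕ) (z : Fin 2 → ℂ) (j : Fin N) :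
    string N z j = M N (fun k => if k < j then Matrix.diagonal z else 1) := by
  rw [string, list_prod_site N (fun _ => Matrix.diagonal z) _
    (List.Nodup.filter _ (List.nodup_finRange N))]
  refine M_congr N fun k => ?_
  simp [List.mem_filter]

-- 2x2 matrix facts

lemma sigmaMinus_eq : sigmaMinus = !![0, 0; 1, 0] := by
  rw [sigmaMinus, sigmaX, sigmaY]
  ext i j
  fin_cases i <;> fin_cases j <;> simp <;> ring_nf <;> simp [Complex.I_sq] <;> ring

lemma sigmaPlus_eq : sigmaPlus = !![0, 1; 0, 0] := by
  rw [sigmaPlus, sigmaX, sigmaY]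
  ext i j
  fin_cases i <;> fin_cases j <;> simp <;> ring_nf <;> simp [Complex.I_sq] <;> ring

lemma diagm_eq : Matrix.diagonal ![-I, I] = !![-I, 0; 0, I] := by
  ext i j; fin_cases i <;> fin_cases j <;> simp [Matrix.diagonal]

lemma diagp_eq : Matrix.diagonal ![I, -I] = !![I, 0; 0, -I] := by
  ext i j; fin_cases i <;> fin_cases j <;> simp [Matrix.diagonal]

lemma dm_mul_dp : Matrix.diagonal ![-I, I] * Matrix.diagonal ![I, -I] = 1 := by
  rw [diagm_eq, diagp_eq]
  ext i j; fin_cases i <;> fin_cases j <;>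
    simp [Matrix.mul_apply, Fin.sum_univ_two, Matrix.one_apply] <;> ring_nf <;>
    simp [Complex.I_sq]

lemma dp_mul_dm : Matrix.diagonal ![I, -I] * Matrix.diagonal ![-I, I] = 1 := by
  rw [diagm_eq, diagp_eq]
  ext i j; fin_cases i <;> fin_cases j <;>
    simp [Matrix.mul_apply, Fin.sum_univ_two, Matrix.one_apply] <;> ring_nf <;>
    simp [Complex.I_sq]

lemma sm_mul_dp : sigmaMinus * Matrix.diagonal ![I, -I] = I • sigmaMinus := by
  rw [sigmaMinus_eq, diagp_eq]
  ext i j; fin_cases i <;> fin_cases j <;>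
    simp [Matrix.mul_apply, Fin.sum_univ_two]

lemma dp_mul_sm : Matrix.diagonal ![I, -I] * sigmaMinus = (-I) • sigmaMinus := by
  rw [sigmaMinus_eq, diagp_eq]
  ext i j; fin_cases i <;> fin_cases j <;>
    simp [Matrix.mul_apply, Fin.sum_univ_two]

lemma sp_mul_dm : sigmaPlus * Matrix.diagonal ![-I, I] = I • sigmaPlus := by
  rw [sigmaPlus_eq, diagm_eq]
  ext i j; fin_cases i <;> fin_cases j <;>
    simp [Matrix.mul_apply, Fin.sum_univ_two]

lemma dm_mul_sp : Matrix.diagonal ![-I, I] * sigmaPlus = (-I) • sigmaPlus := by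
  rw [sigmaPlus_eq, diagm_eq]
  ext i j; fin_cases i <;> fin_cases j <;>
    simp [Matrix.mul_apply, Fin.sum_univ_two]

lemma sm_mul_sp_add : sigmaMinus * sigmaPlus + sigmaPlus * sigmaMinus = 1 := by
  rw [sigmaMinus_eq, sigmaPlus_eq]
  ext i j; fin_cases i <;> fin_cases j <;>
    simp [Matrix.mul_apply, Fin.sum_univ_two, Matrix.one_apply]

def cfun (N : ℕ) (j : Fin N) : Fin N → Matrix (Fin 2) (Fin 2) ℂ := fun k =>
  if k < j then Matrix.diagonal ![-I, I] else if k = j then sigmaMinus else 1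

def cdfun (N : ℕ) (j : Fin N) : Fin N → Matrix (Fin 2) (Fin 2) ℂ := fun k =>
  if k < j then Matrix.diagonal ![I, -I] else if k = j then sigmaPlus else 1

lemma c_eq_M (N : ℕ) (j : Fin N) : c N j = (I ^ (-(j : ℤ))) • M N (cfun N j) := by
  rw [c, string_eq_M, site_eq_M, M_mul]
  congr 1
  refine M_congr N fun k => ?_
  by_cases h1 : k < j
  · simp [cfun, h1, Fin.ne_of_lt h1]
  · by_cases h2 : k = j <;> simp [cfun, h1, h2]

lemma cd_eq_M (N : ℕ) (j : Fin N) : cd N j = (I ^ ((j : ℕ))) • M N (cdfun N j) := by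
  rw [cd, string_eq_M, site_eq_M, M_mul]
  congr 1
  refine M_congr N fun k => ?_
  by_cases h1 : k < j
  · simp [cdfun, h1, Fin.ne_of_lt h1]
  · by_cases h2 : k = j <;> simp [cdfun, h1, h2]

lemma c_mul_cd (N : ℕ) (j k : Fin N) :
    c N j * cd N k = ((I:ℂ) ^ (-(j : ℤ)) * I ^ ((k : ℕ))) •
      M N (fun l => cfun N j l * cdfun N k l) := by
  rw [c_eq_M, cd_eq_M, smul_mul_assoc, mul_smul_comm, M_mul, smul_smul]

lemma cd_mul_c (N : ℕ) (k j : Fin N) :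
    cd N k * c N j = ((I:ℂ) ^ (-(j : ℤ)) * I ^ ((k : ℕ))) •
      M N (fun l => cdfun N k l * cfun N j l) := by
  rw [c_eq_M, cd_eq_M, smul_mul_assoc, mul_smul_comm, M_mul, smul_smul, mul_comm]

lemma Ipow_cancel (j : ℕ) : (I:ℂ) ^ (-(j : ℤ)) * I ^ j = 1 := by
  rw [← zpow_natCast (I:ℂ) j, ← zpow_add₀ Complex.I_ne_zero]
  simp

lemma c_mul_cd_self (N : ℕ) (j : Fin N) :
    c N j * cd N j = site N (sigmaMinus * sigmaPlus) j := by
  rw [c_mul_cd, Ipow_cancel, one_smul, site_eq_M]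
  refine M_congr N fun l => ?_
  by_cases h1 : l < j
  · have e1 : cfun N j l = Matrix.diagonal ![-I, I] := by simp [cfun, h1]
    have e2 : cdfun N j l = Matrix.diagonal ![I, -I] := by simp [cdfun, h1]
    rw [e1, e2, dm_mul_dp]
    simp [Fin.ne_of_lt h1]
  · by_cases h2 : l = j
    · subst h2; simp [cfun, cdfun, h1]
    · simp [cfun, cdfun, h1, h2]

lemma cd_mul_c_self (N : ℕ) (j : Fin N) :
    cd N j * c N j = site N (sigmaPlus * sigmaMinus) j := by
  rw [cd_mul_c, Ipow_cancel, one_smul, site_eq_M]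
  refine M_congr N fun l => ?_
  by_cases h1 : l < j
  · have e1 : cfun N j l = Matrix.diagonal ![-I, I] := by simp [cfun, h1]
    have e2 : cdfun N j l = Matrix.diagonal ![I, -I] := by simp [cdfun, h1]
    rw [e1, e2, dp_mul_dm]
    simp [Fin.ne_of_lt h1]
  · by_cases h2 : l = j
    · subst h2; simp [cfun, cdfun, h1]
    · simp [cfun, cdfun, h1, h2]

lemma site_add (N : ℕ) (a b : Matrix (Fin 2) (Fin 2) ℂ) (j : Fin N) :
    site N a j + site N b j = site N (a + b) j := by
  ext x y
  simp [site, add_mul]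

lemma site_one (N : ℕ) (j : Fin N) : site N (1 : Matrix (Fin 2) (Fin 2) ℂ) j = 1 := by
  rw [site_eq_M, ← M_one N]
  exact M_congr N fun k => by by_cases h : k = j <;> simp [h]

lemma car_diag (N : ℕ) (j : Fin N) : c N j * cd N j + cd N j * c N j = 1 := by
  rw [c_mul_cd_self, cd_mul_c_self, site_add, sm_mul_sp_add, site_one]

lemma car_off (N : ℕ) (j k : Fin N) (h : j ≠ k) :
    c N j * cd N k = -(cd N k * c N j) := by
  rw [c_mul_cd, cd_mul_c]
  rcases lt_or_gt_of_ne h with hlt | hgt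
  · rw [show M N (fun l => cfun N j l * cdfun N k l)
        = (-1 : ℂ) • M N (fun l => cdfun N k l * cfun N j l) from
      M_smul_congr N _ _ j (-1) ?_ ?_]
    · rw [smul_smul, mul_neg_one, neg_smul]
    · have : cfun N j j = sigmaMinus := by simp [cfun]
      have h2 : cdfun N k j = Matrix.diagonal ![I, -I] := by simp [cdfun, hlt]
      rw [this, h2, sm_mul_dp, dp_mul_sm, smul_smul]
      norm_num
    · intro l hl
      by_cases h1 : l < j
      · have hlk : l < k := lt_trans h1 hlt
        have e1 : cfun N j l = Matrix.diagonal ![-I, I] := by simp [cfun, h1]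
        have e2 : cdfun N k l = Matrix.diagonal ![I, -I] := by simp [cdfun, hlk]
        rw [e1, e2, dm_mul_dp, dp_mul_dm]
      · have : cfun N j l = 1 := by simp [cfun, h1, hl]
        rw [this, one_mul, mul_one]
  · rw [show M N (fun l => cfun N j l * cdfun N k l)
        = (-1 : ℂ) • M N (fun l => cdfun N k l * cfun N j l) from
      M_smul_congr N _ _ k (-1) ?_ ?_]
    · rw [smul_smul, mul_neg_one, neg_smul]
    · have h1 : cdfun N k k = sigmaPlus := by simp [cdfun]
      have h2 : cfun N j k = Matrix.diagonal ![-I, I] := by simp [cfun, hgt]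
      rw [h1, h2, dm_mul_sp, sp_mul_dm, smul_smul]
      norm_num
    · intro l hl
      by_cases h1 : l < k
      · have hlj : l < j := lt_trans h1 hgt
        have e1 : cfun N j l = Matrix.diagonal ![-I, I] := by simp [cfun, hlj]
        have e2 : cdfun N k l = Matrix.diagonal ![I, -I] := by simp [cdfun, h1]
        rw [e1, e2, dm_mul_dp, dp_mul_dm]
      · have : cdfun N k l = 1 := by simp [cdfun, h1, hl]
        rw [this, one_mul, mul_one]

def eps (L : ℕ) (j : Fin (2 * L)) : ℂ := if (j : ℕ) + 1 = 2 * L then (-1) ^ L else 1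

lemma fsucc_val {N : ℕ} (j : Fin N) : ((fsucc j : Fin N) : ℕ) = ((j : ℕ) + 1) % N := rfl

lemma fsucc_cases {N : ℕ} (j : Fin N) :
    ((j : ℕ) + 1 < N ∧ ((fsucc j : Fin N) : ℕ) = (j : ℕ) + 1) ∨
    ((j : ℕ) + 1 = N ∧ ((fsucc j : Fin N) : ℕ) = 0) := by
  have hj := j.isLt
  by_cases h : (j : ℕ) + 1 < N
  · exact Or.inl ⟨h, by rw [fsucc_val, Nat.mod_eq_of_lt h]⟩
  · have : (j : ℕ) + 1 = N := by omega
    exact Or.inr ⟨this, by rw [fsucc_val, this, Nat.mod_self]⟩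

lemma fsucc_ne {N : ℕ} (hN : 1 < N) (j : Fin N) : fsucc j ≠ j := by
  intro hc
  have := congrArg (Fin.val) hc
  rcases fsucc_cases j with ⟨h, hv⟩ | ⟨h, hv⟩ <;> omega

lemma ffd (N : ℕ) (a b : Fin N) :
    f N a * fd N b = ((I:ℂ) ^ ((a : ℕ) + (b : ℕ) + 2)) • (c N a * cd N b) := by
  rw [f, fd, smul_mul_assoc, mul_smul_comm, smul_smul, ← pow_add]
  congr 2
  ring

lemma Ipow_two_mul (n : ℕ) : (I:ℂ) ^ (2 * n) = (-1) ^ n := by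
  rw [pow_mul, Complex.I_sq]

lemma Ipow_diag (v : ℕ) : (I:ℂ) ^ (v + v + 2) = (-1) ^ (v + 1) := by
  rw [show v + v + 2 = 2 * (v + 1) by ring, Ipow_two_mul]

lemma S2 (L : ℕ) (hL : 0 < L) (j : Fin (2 * L)) :
    (I:ℂ) ^ (((fsucc j : Fin (2*L)) : ℕ) + ((fsucc j : Fin (2*L)) : ℕ) + 2) = (-1) ^ ((j : ℕ)) := by
  rw [Ipow_diag]
  rcases fsucc_cases j with ⟨h, hv⟩ | ⟨h, hv⟩
  · rw [hv, show (j:ℕ) + 1 + 1 = (j:ℕ) + 2 by ring, pow_add]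
    norm_num
  · have hodd : Odd ((j:ℕ)) := ⟨L - 1, by omega⟩
    rw [hv, hodd.neg_one_pow]
    norm_num

lemma S3 (L : ℕ) (hL : 0 < L) (j : Fin (2 * L)) :
    (I:ℂ) ^ (((j : ℕ)) + ((fsucc j : Fin (2*L)) : ℕ) + 2) = -I * (-1) ^ ((j : ℕ)) * eps L j := by
  rcases fsucc_cases j with ⟨h, hv⟩ | ⟨h, hv⟩
  · have he : eps L j = 1 := by rw [eps, if_neg (by omega)]
    rw [hv, he, show (j:ℕ) + ((j:ℕ) + 1) + 2 = 2 * ((j:ℕ) + 1) + 1 by ring, pow_succ,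
      Ipow_two_mul, pow_succ]
    ring
  · have he : eps L j = (-1) ^ L := by rw [eps, if_pos h]
    have hodd : Odd ((j:ℕ)) := ⟨L - 1, by omega⟩
    rw [hv, he, hodd.neg_one_pow, show (j:ℕ) + 0 + 2 = 2 * L + 1 by omega, pow_succ,
      Ipow_two_mul]
    ring

lemma neg_e (L : ℕ) (hL : 0 < L) (j : Fin (2 * L)) :
    -(e (2*L) j) =
      ((-1:ℂ) ^ ((j : ℕ))) • (cd (2*L) (fsucc j) * c (2*L) (fsucc j) - cd (2*L) j * c (2*L) j)
      + (-I * (-1:ℂ) ^ ((j : ℕ)) * eps L j) •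
          (cd (2*L) (fsucc j) * c (2*L) j + cd (2*L) j * c (2*L) (fsucc j)) := by
  have hN : 1 < 2 * L := by omega
  have hne : fsucc j ≠ j := fsucc_ne hN j
  have hjj : c (2*L) j * cd (2*L) j = 1 - cd (2*L) j * c (2*L) j := by
    rw [eq_sub_iff_add_eq]; exact car_diag _ j
  have hss : c (2*L) (fsucc j) * cd (2*L) (fsucc j)
      = 1 - cd (2*L) (fsucc j) * c (2*L) (fsucc j) := by
    rw [eq_sub_iff_add_eq]; exact car_diag _ (fsucc j)
  have h1 : c (2*L) j * cd (2*L) (fsucc j) = -(cd (2*L) (fsucc j) * c (2*L) j) :=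
    car_off _ _ _ (Ne.symm hne)
  have h2 : c (2*L) (fsucc j) * cd (2*L) j = -(cd (2*L) j * c (2*L) (fsucc j)) :=
    car_off _ _ _ hne
  rw [e, add_mul, mul_add, mul_add, ffd, ffd, ffd, ffd, hjj, hss, h1, h2]
  rw [Ipow_diag, S2 L hL, S3 L hL,
    show ((fsucc j : Fin (2*L)) : ℕ) + (j : ℕ) + 2 = (j : ℕ) + ((fsucc j : Fin (2*L)) : ℕ) + 2
      by ring, S3 L hL, pow_succ]
  module

lemma hparity (L : ℕ) (j : Fin (2 * L)) :
    ((-1:ℂ)) ^ ((fsucc j : Fin (2*L)) : ℕ) = (-1) ^ ((j : ℕ) + 1) := by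
  rcases fsucc_cases j with ⟨h, hv⟩ | ⟨h, hv⟩
  · rw [hv]
  · rw [hv, pow_zero]
    exact (Even.neg_one_pow (⟨L, by omega⟩ : Even ((j:ℕ) + 1))).symm

lemma fsucc_eq_add_one {N : ℕ} [NeZero N] (hN : 1 < N) (j : Fin N) : fsucc j = j + 1 := by
  haveI : NeZero N := ⟨by omega⟩
  apply Fin.ext
  rw [fsucc_val, Fin.add_def, Fin.val_one', Nat.mod_eq_of_lt hN]

lemma sum_shift {L : ℕ} (hL : 0 < L) (g : Fin (2*L) → Op (2*L)) :
    ∑ j : Fin (2*L), g (fsucc j) = ∑ j : Fin (2*L), g j := by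
  haveI : NeZero (2*L) := ⟨by omega⟩
  have hN : 1 < 2*L := by omega
  refine Fintype.sum_equiv (Equiv.addRight (1 : Fin (2*L))) _ _ fun x => ?_
  rw [fsucc_eq_add_one hN]
  rfl

def A (L : ℕ) (k l : Fin (2*L)) : ℂ :=
  (if k = l then 2 * (-1:ℂ) ^ ((k:ℕ) + 1) else 0)
  + (if k = fsucc l then -I * (-1) ^ ((l:ℕ)) * eps L l else 0)
  + (if l = fsucc k then -I * (-1) ^ ((k:ℕ)) * eps L k else 0)

lemma sum_neg_e (L : ℕ) (hL : 0 < L) :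
    ∑ j : Fin (2*L), -(e (2*L) j)
      = ∑ k : Fin (2*L), ∑ l : Fin (2*L), A L k l • (cd (2*L) k * c (2*L) l) := by
  have hXdef : True := trivial
  -- abbreviation
  set X : Fin (2*L) → Fin (2*L) → Op (2*L) := fun k l => cd (2*L) k * c (2*L) l with hX
  -- RHS
  have hR : ∑ k : Fin (2*L), ∑ l : Fin (2*L), A L k l • X k l
      = (∑ k : Fin (2*L), (2 * (-1:ℂ) ^ ((k:ℕ) + 1)) • X k k)
        + ((∑ l : Fin (2*L), (-I * (-1:ℂ) ^ ((l:ℕ)) * eps L l) • X (fsucc l) l)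
          + (∑ k : Fin (2*L), (-I * (-1:ℂ) ^ ((k:ℕ)) * eps L k) • X k (fsucc k))) := by
    have step : ∀ k l : Fin (2*L), A L k l • X k l
        = (if k = l then (2 * (-1:ℂ) ^ ((k:ℕ) + 1)) • X k l else 0)
          + ((if k = fsucc l then (-I * (-1:ℂ) ^ ((l:ℕ)) * eps L l) • X k l else 0)
            + (if l = fsucc k then (-I * (-1:ℂ) ^ ((k:ℕ)) * eps L k) • X k l else 0)) := by
      intro k l
      simp only [A, add_smul, ite_smul, zero_smul, add_assoc]
    simp only [step, Finset.sum_add_distrib]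
    congr 1
    · refine Finset.sum_congr rfl fun k _ => ?_
      rw [Finset.sum_ite_eq Finset.univ k (fun l => (2 * (-1:ℂ) ^ ((k:ℕ) + 1)) • X k l),
        if_pos (Finset.mem_univ k)]
    congr 1
    · rw [Finset.sum_comm]
      refine Finset.sum_congr rfl fun l _ => ?_
      rw [Finset.sum_ite_eq' Finset.univ (fsucc l)
        (fun k => (-I * (-1:ℂ) ^ ((l:ℕ)) * eps L l) • X k l),
        if_pos (Finset.mem_univ _)]
    · refine Finset.sum_congr rfl fun k _ => ?_
      rw [Finset.sum_ite_eq' Finset.univ (fsucc k)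
        (fun l => (-I * (-1:ℂ) ^ ((k:ℕ)) * eps L k) • X k l),
        if_pos (Finset.mem_univ _)]
  rw [hR]
  -- LHS
  have step2 : ∀ j : Fin (2*L), -(e (2*L) j)
      = ((-1:ℂ) ^ ((j:ℕ)) • X (fsucc j) (fsucc j) + (-((-1:ℂ) ^ ((j:ℕ)))) • X j j)
        + (((-I * (-1:ℂ) ^ ((j:ℕ)) * eps L j) • X (fsucc j) j)
          + ((-I * (-1:ℂ) ^ ((j:ℕ)) * eps L j) • X j (fsucc j))) := by
    intro j
    rw [neg_e L hL j, hX]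
    module
  simp only [step2, Finset.sum_add_distrib]
  congr 1
  · -- diagonal part
    have e1 : ∑ j : Fin (2*L), ((-1:ℂ) ^ ((j:ℕ))) • X (fsucc j) (fsucc j)
        = ∑ k : Fin (2*L), ((-1:ℂ) ^ ((k:ℕ) + 1)) • X k k := by
      rw [← sum_shift hL (fun k => ((-1:ℂ) ^ ((k:ℕ) + 1)) • X k k)]
      refine Finset.sum_congr rfl fun j _ => ?_
      congr 1
      rw [pow_succ, hparity L j, pow_succ]
      ring
    rw [e1, ← Finset.sum_add_distrib]
    refine Finset.sum_congr rfl fun k _ => ?_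
    rw [← add_smul]
    congr 1
    ring

def alphaL (L : ℕ) : ℝ := if Even L then 2 * Real.pi / (2 * L) else Real.pi / (2 * L)

lemma thetad_mul_theta (N : ℕ) (p q : ℝ) :
    thetad N p * theta N q
      = ∑ k : Fin N, ∑ l : Fin N,
          (((N:ℕ):ℂ)⁻¹ * (Complex.exp (I * ((k : ℕ) + 1) * (p : ℂ)) *
            Complex.exp (-(I * ((l : ℕ) + 1) * (q : ℂ))))) • (cd N k * c N l) := by
  rw [thetad, theta, smul_mul_smul_comm, Finset.sum_mul_sum]
  have hs : ((Real.sqrt N : ℂ))⁻¹ * ((Real.sqrt N : ℂ))⁻¹ = ((N:ℕ):ℂ)⁻¹ := by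
    rw [← mul_inv, ← Complex.ofReal_mul, Real.mul_self_sqrt (Nat.cast_nonneg N),
      Complex.ofReal_natCast]
  rw [hs, Finset.smul_sum]
  refine Finset.sum_congr rfl fun k _ => ?_
  rw [Finset.smul_sum]
  refine Finset.sum_congr rfl fun l _ => ?_
  rw [smul_mul_smul_comm, smul_smul]

lemma mom_eq (L : ℕ) (hL : 0 < L) (m : Fin (2 * L)) :
    mom L m = alphaL L + (m : ℕ) * (2 * Real.pi / (2 * L)) := by
  have h2L : ((2 * L : ℕ) : ℝ) ≠ 0 := by positivity
  rw [mom, alphaL]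
  split_ifs with h
  · push_cast at h2L ⊢
    field_simp
    ring
  · push_cast at h2L ⊢
    field_simp
    ring

lemma expsum (L : ℕ) (hL : 0 < L) (d : ℤ) :
    ∑ m : Fin (2 * L), Complex.exp (I * (d : ℂ) * ((mom L m : ℝ) : ℂ))
      = if ((2 * L : ℕ) : ℤ) ∣ d then ((2 * L : ℕ) : ℂ) * Complex.exp (I * (d : ℂ) * ((alphaL L : ℝ) : ℂ))
        else 0 := by
  have hNC : ((2 * L : ℕ) : ℂ) ≠ 0 := Nat.cast_ne_zero.mpr (by omega)
  have hLC : ((L : ℕ) : ℂ) ≠ 0 := Nat.cast_ne_zero.mpr (by omega)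
  set x : ℂ := Complex.exp (I * (d : ℂ) * ((2 * Real.pi / (2 * L) : ℝ) : ℂ)) with hx
  have hterm : ∀ m : Fin (2 * L), Complex.exp (I * (d : ℂ) * ((mom L m : ℝ) : ℂ))
      = Complex.exp (I * (d : ℂ) * ((alphaL L : ℝ) : ℂ)) * x ^ (m : ℕ) := by
    intro m
    rw [mom_eq L hL m, hx, ← Complex.exp_nat_mul, ← Complex.exp_add]
    congr 1
    push_cast
    ring
  rw [Finset.sum_congr rfl (fun m _ => hterm m), ← Finset.mul_sum]
  rw [Fin.sum_univ_eq_sum_range (fun i => x ^ i) (2 * L)]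
  by_cases hdvd : ((2 * L : ℕ) : ℤ) ∣ d
  · have hx1 : x = 1 := by
      obtain ⟨t, ht⟩ := hdvd
      rw [hx, Complex.exp_eq_one_iff]
      refine ⟨t, ?_⟩
      rw [ht]
      push_cast
      field_simp
    rw [if_pos hdvd, hx1]
    simp [mul_comm]
  · rw [if_neg hdvd]
    have hx1 : x ≠ 1 := by
      intro hc
      rw [hx, Complex.exp_eq_one_iff] at hc
      obtain ⟨n, hn⟩ := hc
      apply hdvd
      refine ⟨n, ?_⟩
      push_cast at hn
      have h2pi : (2 * (Real.pi : ℂ) * I) ≠ 0 := by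
        simp [Real.pi_ne_zero, Complex.I_ne_zero]
      have key : (2 * (Real.pi : ℂ) * I) * (d : ℂ)
          = (2 * (Real.pi : ℂ) * I) * (((2 * L : ℕ) : ℂ) * (n : ℂ)) := by
        field_simp at hn
        push_cast
        linear_combination (2 * (Real.pi : ℂ) * I) * hn
      have := mul_left_cancel₀ h2pi key
      exact_mod_cast this
    have hxN : x ^ (2 * L) = 1 := by
      rw [hx, ← Complex.exp_nat_mul]
      rw [show ((2 * L : ℕ) : ℂ) * (I * (d : ℂ) * ((2 * Real.pi / (2 * L) : ℝ) : ℂ))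
          = (d : ℂ) * (2 * (Real.pi : ℂ) * I) from by push_cast; field_simp]
      exact Complex.exp_int_mul_two_pi_mul_I d
    rw [geom_sum_eq hx1, hxN]
    simp

lemma dvd_window {Nz : ℤ} (hN : 0 < Nz) {x : ℤ} (h1 : -Nz ≤ x) (h2 : x ≤ Nz - 2) (h : Nz ∣ x) :
    x = 0 ∨ x = -Nz := by
  obtain ⟨t, rfl⟩ := h
  rcases lt_trichotomy t 0 with h' | h' | h'
  · have : t = -1 := by nlinarith
    right; rw [this]; ring
  · left; rw [h']; ring
  · exfalso; nlinarith

lemma dvd_iff_eq (L : ℕ) (hL : 0 < L) (k l : Fin (2 * L)) :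
    ((2 * L : ℕ) : ℤ) ∣ (((k : ℕ) : ℤ) - ((l : ℕ) : ℤ)) ↔ k = l := by
  constructor
  · intro h
    have h1 := k.isLt; have h2 := l.isLt
    have habs : |((k : ℕ) : ℤ) - ((l : ℕ) : ℤ)| < ((2 * L : ℕ) : ℤ) := by
      rw [abs_lt]; omega
    have := Int.eq_zero_of_abs_lt_dvd h habs
    exact Fin.ext (by omega)
  · rintro rfl; simp

lemma dvd_iff_fsucc (L : ℕ) (hL : 0 < L) (k l : Fin (2 * L)) :
    ((2 * L : ℕ) : ℤ) ∣ (((k : ℕ) : ℤ) - ((l : ℕ) : ℤ) - 1) ↔ k = fsucc l := by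
  constructor
  · intro h
    have h1 := k.isLt; have h2 := l.isLt
    have hcases := dvd_window (by omega : (0:ℤ) < ((2*L:ℕ):ℤ)) (by omega) (by omega) h
    rcases fsucc_cases l with ⟨hs, hv⟩ | ⟨hs, hv⟩ <;>
      rcases hcases with h' | h' <;> (apply Fin.ext; omega)
  · rintro rfl
    rcases fsucc_cases l with ⟨hs, hv⟩ | ⟨hs, hv⟩
    · refine ⟨0, by omega⟩
    · refine ⟨-1, by push_cast [hv]; omega⟩

lemma dvd_iff_fsucc' (L : ℕ) (hL : 0 < L) (k l : Fin (2 * L)) :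
    ((2 * L : ℕ) : ℤ) ∣ (((k : ℕ) : ℤ) - ((l : ℕ) : ℤ) + 1) ↔ l = fsucc k := by
  rw [show (((k : ℕ) : ℤ) - ((l : ℕ) : ℤ) + 1) = -((((l : ℕ) : ℤ) - ((k : ℕ) : ℤ) - 1)) by ring,
    dvd_neg]
  exact dvd_iff_fsucc L hL l k

lemma phi_N (L : ℕ) (hL : 0 < L) :
    Complex.exp (I * ((((2 * L : ℕ) : ℤ) : ℂ)) * ((alphaL L : ℝ) : ℂ)) = (-1) ^ L := by
  have hLC : ((L : ℕ) : ℂ) ≠ 0 := Nat.cast_ne_zero.mpr (by omega)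
  rw [alphaL]
  split_ifs with h
  · rw [show I * ((((2 * L : ℕ) : ℤ) : ℂ)) * ((2 * Real.pi / (2 * L) : ℝ) : ℂ)
        = 2 * (Real.pi : ℂ) * I from by push_cast; field_simp]
    rw [Complex.exp_two_pi_mul_I, h.neg_one_pow]
  · rw [show I * ((((2 * L : ℕ) : ℤ) : ℂ)) * ((Real.pi / (2 * L) : ℝ) : ℂ)
        = (Real.pi : ℂ) * I from by push_cast; field_simp]
    rw [Complex.exp_pi_mul_I, (Nat.not_even_iff_odd.mp h).neg_one_pow]

lemma phi_negN (L : ℕ) (hL : 0 < L) :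
    Complex.exp (I * (((-(2 * L : ℕ) : ℤ) : ℂ)) * ((alphaL L : ℝ) : ℂ)) = (-1) ^ L := by
  have hLC : ((L : ℕ) : ℂ) ≠ 0 := Nat.cast_ne_zero.mpr (by omega)
  rw [alphaL]
  split_ifs with h
  · rw [show I * (((-(2 * L : ℕ) : ℤ) : ℂ)) * ((2 * Real.pi / (2 * L) : ℝ) : ℂ)
        = ((-1 : ℤ) : ℂ) * (2 * (Real.pi : ℂ) * I) from by push_cast; field_simp]
    rw [Complex.exp_int_mul_two_pi_mul_I, h.neg_one_pow]
  · rw [show I * (((-(2 * L : ℕ) : ℤ) : ℂ)) * ((Real.pi / (2 * L) : ℝ) : ℂ)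
        = -((Real.pi : ℂ) * I) from by push_cast; field_simp]
    rw [Complex.exp_neg, Complex.exp_pi_mul_I, (Nat.not_even_iff_odd.mp h).neg_one_pow]
    norm_num

lemma summand_decomp (L : ℕ) (hL : 0 < L) (k l m : Fin (2 * L)) :
    2 * (((1 + Real.sin (mom L m)) : ℝ) : ℂ) *
        (((2 * L : ℕ) : ℂ)⁻¹ * (Complex.exp (I * ((k : ℕ) + 1) * ((mom L m : ℝ) : ℂ)) *
          Complex.exp (-(I * ((l : ℕ) + 1) * (((mom L m + Real.pi) : ℝ) : ℂ)))))
      = ((2 * L : ℕ) : ℂ)⁻¹ * (-1) ^ ((l : ℕ) + 1) *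
          (2 * Complex.exp (I * (((((k : ℕ) : ℤ) - ((l : ℕ) : ℤ)) : ℤ) : ℂ) * ((mom L m : ℝ) : ℂ))
            + I * Complex.exp (I * (((((k : ℕ) : ℤ) - ((l : ℕ) : ℤ) - 1) : ℤ) : ℂ) * ((mom L m : ℝ) : ℂ))
            - I * Complex.exp (I * (((((k : ℕ) : ℤ) - ((l : ℕ) : ℤ) + 1) : ℤ) : ℂ) * ((mom L m : ℝ) : ℂ))) := by
  set p : ℝ := mom L m with hp
  set E : ℂ := Complex.exp (I * (p : ℂ)) with hE
  set F : ℂ := Complex.exp (-(I * (p : ℂ))) with hF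
  have hEF : E * F = 1 := by
    rw [hE, hF, ← Complex.exp_add]
    simp
  have hm1 : (-1 : ℂ) = Complex.exp (-((Real.pi : ℂ) * I)) := by
    rw [Complex.exp_neg, Complex.exp_pi_mul_I]
    norm_num
  have ha : Complex.exp (I * ((k : ℕ) + 1) * (p : ℂ)) = E ^ ((k : ℕ) + 1) := by
    rw [hE, ← Complex.exp_nat_mul]
    congr 1
    push_cast
    ring
  have hb : Complex.exp (-(I * ((l : ℕ) + 1) * ((p + Real.pi : ℝ) : ℂ)))
      = F ^ ((l : ℕ) + 1) * ((-1 : ℂ) ^ ((l : ℕ) + 1)) := by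
    rw [hF, hm1, ← Complex.exp_nat_mul, ← Complex.exp_nat_mul, ← Complex.exp_add]
    congr 1
    push_cast
    ring
  have hc : Complex.exp (I * (((((k : ℕ) : ℤ) - ((l : ℕ) : ℤ)) : ℤ) : ℂ) * (p : ℂ))
      = E ^ ((k : ℕ)) * F ^ ((l : ℕ)) := by
    rw [hE, hF, ← Complex.exp_nat_mul, ← Complex.exp_nat_mul, ← Complex.exp_add]
    congr 1
    push_cast
    ring
  have hd2 : Complex.exp (I * (((((k : ℕ) : ℤ) - ((l : ℕ) : ℤ) - 1) : ℤ) : ℂ) * (p : ℂ))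
      = E ^ ((k : ℕ)) * F ^ ((l : ℕ)) * F := by
    rw [hE, hF, ← Complex.exp_nat_mul, ← Complex.exp_nat_mul, ← Complex.exp_add,
      ← Complex.exp_add]
    congr 1
    push_cast
    ring
  have he : Complex.exp (I * (((((k : ℕ) : ℤ) - ((l : ℕ) : ℤ) + 1) : ℤ) : ℂ) * (p : ℂ))
      = E ^ ((k : ℕ)) * F ^ ((l : ℕ)) * E := by
    rw [hE, hF, ← Complex.exp_nat_mul, ← Complex.exp_nat_mul, ← Complex.exp_add,
      ← Complex.exp_add]
    congr 1
    push_cast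
    ring
  have hsin : ((1 + Real.sin p : ℝ) : ℂ) = 1 + (F - E) * I / 2 := by
    have e1 : Complex.exp (-(p : ℂ) * I) = F := by
      rw [hF]
      congr 1
      ring
    have e2 : Complex.exp ((p : ℂ) * I) = E := by
      rw [hE]
      congr 1
      ring
    rw [Complex.ofReal_add, Complex.ofReal_one, Complex.ofReal_sin, Complex.sin, e1, e2]
  rw [ha, hb, hc, hd2, he, hsin]
  linear_combination (((2 * L : ℕ) : ℂ)⁻¹ * (-1 : ℂ) ^ ((l : ℕ) + 1) * E ^ ((k : ℕ)) *
    F ^ ((l : ℕ)) * (2 + I * F - I * E)) * hEF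

lemma C_eq_A (L : ℕ) (hL : 0 < L) (k l : Fin (2 * L)) :
    ∑ m : Fin (2 * L), 2 * (((1 + Real.sin (mom L m)) : ℝ) : ℂ) *
        (((2 * L : ℕ) : ℂ)⁻¹ * (Complex.exp (I * ((k : ℕ) + 1) * ((mom L m : ℝ) : ℂ)) *
          Complex.exp (-(I * ((l : ℕ) + 1) * (((mom L m + Real.pi) : ℝ) : ℂ)))))
      = A L k l := by
  have hN : 1 < 2 * L := by omega
  have hNC : ((2 * L : ℕ) : ℂ) ≠ 0 := Nat.cast_ne_zero.mpr (by omega)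
  rw [Finset.sum_congr rfl (fun m _ => summand_decomp L hL k l m)]
  rw [← Finset.mul_sum]
  rw [show ∑ m : Fin (2 * L),
      (2 * Complex.exp (I * (((((k : ℕ) : ℤ) - ((l : ℕ) : ℤ)) : ℤ) : ℂ) * ((mom L m : ℝ) : ℂ))
        + I * Complex.exp (I * (((((k : ℕ) : ℤ) - ((l : ℕ) : ℤ) - 1) : ℤ) : ℂ) * ((mom L m : ℝ) : ℂ))
        - I * Complex.exp (I * (((((k : ℕ) : ℤ) - ((l : ℕ) : ℤ) + 1) : ℤ) : ℂ) * ((mom L m : ℝ) : ℂ)))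
      = 2 * (∑ m : Fin (2 * L),
            Complex.exp (I * (((((k : ℕ) : ℤ) - ((l : ℕ) : ℤ)) : ℤ) : ℂ) * ((mom L m : ℝ) : ℂ)))
        + I * (∑ m : Fin (2 * L),
            Complex.exp (I * (((((k : ℕ) : ℤ) - ((l : ℕ) : ℤ) - 1) : ℤ) : ℂ) * ((mom L m : ℝ) : ℂ)))
        - I * (∑ m : Fin (2 * L),
            Complex.exp (I * (((((k : ℕ) : ℤ) - ((l : ℕ) : ℤ) + 1) : ℤ) : ℂ) * ((mom L m : ℝ) : ℂ)))
      from by rw [Finset.sum_sub_distrib, Finset.sum_add_distrib, Finset.mul_sum,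
        Finset.mul_sum, Finset.mul_sum]]
  rw [expsum L hL _, expsum L hL _, expsum L hL _]
  rw [A]
  -- rewrite divisibility conditions into Fin statements
  have hc1 := dvd_iff_eq L hL k l
  have hc2 := dvd_iff_fsucc L hL k l
  have hc3 := dvd_iff_fsucc' L hL k l
  simp only [hc1, hc2, hc3]
  -- special values
  have hphi1 : k = l →
      Complex.exp (I * (((((k : ℕ) : ℤ) - ((l : ℕ) : ℤ)) : ℤ) : ℂ) * ((alphaL L : ℝ) : ℂ)) = 1 := by
    intro h
    subst h
    simp
  have hphi2 : k = fsucc l →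
      Complex.exp (I * (((((k : ℕ) : ℤ) - ((l : ℕ) : ℤ) - 1) : ℤ) : ℂ) * ((alphaL L : ℝ) : ℂ))
        = eps L l := by
    intro h
    have hkv : (k : ℕ) = ((fsucc l : Fin (2*L)) : ℕ) := by rw [h]
    rcases fsucc_cases l with ⟨hs, hv⟩ | ⟨hs, hv⟩
    · rw [show (((k : ℕ) : ℤ) - ((l : ℕ) : ℤ) - 1 : ℤ) = 0 by omega]
      rw [eps, if_neg (by omega)]
      simp
    · rw [show (((k : ℕ) : ℤ) - ((l : ℕ) : ℤ) - 1 : ℤ) = -(2 * L : ℕ) by omega]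
      rw [eps, if_pos hs, phi_negN L hL]
  have hphi3 : l = fsucc k →
      Complex.exp (I * (((((k : ℕ) : ℤ) - ((l : ℕ) : ℤ) + 1) : ℤ) : ℂ) * ((alphaL L : ℝ) : ℂ))
        = eps L k := by
    intro h
    have hlv : (l : ℕ) = ((fsucc k : Fin (2*L)) : ℕ) := by rw [h]
    rcases fsucc_cases k with ⟨hs, hv⟩ | ⟨hs, hv⟩
    · rw [show (((k : ℕ) : ℤ) - ((l : ℕ) : ℤ) + 1 : ℤ) = 0 by omega]
      rw [eps, if_neg (by omega)]
      simp
    · rw [show (((k : ℕ) : ℤ) - ((l : ℕ) : ℤ) + 1 : ℤ) = ((2 * L : ℕ) : ℤ) by omega]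
      rw [eps, if_pos hs, phi_N L hL]
  have hsign3 : l = fsucc k → ((-1 : ℂ)) ^ ((l : ℕ)) = -(-1 : ℂ) ^ ((k : ℕ)) := by
    intro h
    rw [h, hparity L k, pow_succ]
    ring
  have hLC : ((L : ℕ) : ℂ) ≠ 0 := Nat.cast_ne_zero.mpr (by omega)
  by_cases h1 : k = l
  · have h2 : ¬(k = fsucc l) := by
      rw [h1]
      exact fun hc => (fsucc_ne hN l) hc.symm
    have h3 : ¬(l = fsucc k) := by
      rw [← h1] at *
      exact fun hc => (fsucc_ne hN k) hc.symm
    rw [if_pos h1, if_neg h2, if_neg h3, if_pos h1, if_neg h2, if_neg h3, hphi1 h1]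
    subst h1
    field_simp
    ring
  · by_cases h2 : k = fsucc l <;> by_cases h3 : l = fsucc k
    · rw [if_neg h1, if_pos h2, if_pos h3, if_neg h1, if_pos h2, if_pos h3,
        hphi2 h2, hphi3 h3, pow_succ, hsign3 h3]
      field_simp
      ring
    · rw [if_neg h1, if_pos h2, if_neg h3, if_neg h1, if_pos h2, if_neg h3,
        hphi2 h2, pow_succ]
      field_simp
      ring
    · rw [if_neg h1, if_neg h2, if_pos h3, if_neg h1, if_neg h2, if_pos h3,
        hphi3 h3, pow_succ, hsign3 h3]
      field_simp
      ring
    · rw [if_neg h1, if_neg h2, if_neg h3, if_neg h1, if_neg h2, if_neg h3]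
      ring

/-- **Fourier diagonalisation of the periodic gl(1|1) Hamiltonian:**
`−Σ_{j=1}^{N} e_j = 2 Σ_{p ∈ P_N} (1 + sin p) θ_p† θ_{p+π}` (`N = 2L`).  Since
`θ` is 2π-periodic in its real argument, `θ_{p+π}` is the mode of the unique
element of `P_N` congruent to `p + π` modulo 2π. -/
theorem gl11_hamiltonian_fourier_diagonal (L : ℕ) (hL : 0 < L) :
    -(∑ j : Fin (2 * L), e (2 * L) j) =
      (2 : ℂ) • ∑ m : Fin (2 * L),
        (((1 + Real.sin (mom L m)) : ℝ) : ℂ) •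
          (thetad (2 * L) (mom L m) * theta (2 * L) (mom L m + Real.pi)) := by
  have hsum : -(∑ j : Fin (2 * L), e (2 * L) j) = ∑ j : Fin (2 * L), -(e (2 * L) j) := by
    rw [← Finset.sum_neg_distrib]
  rw [hsum, sum_neg_e L hL]
  refine Eq.symm ?_
  calc (2 : ℂ) • ∑ m : Fin (2 * L),
        (((1 + Real.sin (mom L m)) : ℝ) : ℂ) •
          (thetad (2 * L) (mom L m) * theta (2 * L) (mom L m + Real.pi))
      = ∑ m : Fin (2 * L), ∑ k : Fin (2 * L), ∑ l : Fin (2 * L),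
          (2 * (((1 + Real.sin (mom L m)) : ℝ) : ℂ) *
            (((2 * L : ℕ) : ℂ)⁻¹ * (Complex.exp (I * ((k : ℕ) + 1) * ((mom L m : ℝ) : ℂ)) *
              Complex.exp (-(I * ((l : ℕ) + 1) * (((mom L m + Real.pi) : ℝ) : ℂ))))))
            • (cd (2 * L) k * c (2 * L) l) := by
        rw [Finset.smul_sum]
        refine Finset.sum_congr rfl fun m _ => ?_
        rw [thetad_mul_theta (2 * L) (mom L m) (mom L m + Real.pi), smul_smul,
          Finset.smul_sum]
        refine Finset.sum_congr rfl fun k _ => ?_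
        rw [Finset.smul_sum]
        refine Finset.sum_congr rfl fun l _ => ?_
        rw [smul_smul]
    _ = ∑ k : Fin (2 * L), ∑ l : Fin (2 * L), ∑ m : Fin (2 * L),
          (2 * (((1 + Real.sin (mom L m)) : ℝ) : ℂ) *
            (((2 * L : ℕ) : ℂ)⁻¹ * (Complex.exp (I * ((k : ℕ) + 1) * ((mom L m : ℝ) : ℂ)) *
              Complex.exp (-(I * ((l : ℕ) + 1) * (((mom L m + Real.pi) : ℝ) : ℂ))))))
            • (cd (2 * L) k * c (2 * L) l) := by
        rw [Finset.sum_comm]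
        exact Finset.sum_congr rfl fun k _ => Finset.sum_comm
    _ = ∑ k : Fin (2 * L), ∑ l : Fin (2 * L), A L k l • (cd (2 * L) k * c (2 * L) l) := by
        refine Finset.sum_congr rfl fun k _ => Finset.sum_congr rfl fun l _ => ?_
        rw [← Finset.sum_smul, C_eq_A L hL k l]


end SpinChain

end
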